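/- Let (R,m) be an F-finite reduced Noetherian local ring of prime characteristic p. For each e ≥ 0 let D_e be a set of additive maps φ : R → R satisfying φ(r^{p^e}·x) = r·φ(x) for all r, x ∈ R, such that: D_0 is the set of all multiplication maps x ↦ r·x (r ∈ R); each D_e is closed under addition; φ ∈ D_e and ψ ∈ D_{e'} imply φ∘ψ ∈ D_{e+e'}; and D_e contains a nonzero map for some e ≥ 1 (so (R, D) is a Cartier algebra pair). Suppose T is an ideal of R such that T ∩ R^o ≠ ∅, φ(T) ⊆ T for every e and every φ ∈ D_e, and T ⊆ J for every ideal J with J ∩ R^o ≠ ∅ that satisfies φ(J) ⊆ J for all such φ (i.e., T = τ(R,D) is the smallest D-compatible ideal meeting R^o). Then T is a strong test ideal: T·(I*) = T·I for every ideal I of R. -/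

import Mathlib

/-- The `q`-th Frobenius power `I^{[q]}` of an ideal `I`: the ideal generated by
the `q`-th powers of the elements of `I`. -/
def frobeniusPower {R : Type*} [CommRing R] (I : Ideal R) (q : ℕ) : Ideal R :=
  Ideal.span ((fun a => a ^ q) '' (I : Set R))

/-- `Rreg c` means `c ∈ R^o`, i.e. `c` avoids every minimal prime of `R`. -/
def Rreg {R : Type*} [CommRing R] (c : R) : Prop :=
  ∀ P ∈ minimalPrimes R, c ∉ P

/-- `x` lies in the tight closure `I*` of `I` (characteristic `p`):
there is `c ∈ R^o` with `c * x^(p^e) ∈ I^{[p^e]}` for all `e ≫ 0`. -/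
def InTightClosure {R : Type*} [CommRing R] (p : ℕ) (I : Ideal R) (x : R) : Prop :=
  ∃ c, Rreg c ∧ ∃ N : ℕ, ∀ e ≥ N, c * x ^ p ^ e ∈ frobeniusPower I (p ^ e)

/-- The tight closure `I*` of `I`, as an ideal: the span of the set of elements in the
tight closure (this set is already an ideal, so taking the span is harmless). -/
def tightClosure {R : Type*} [CommRing R] (p : ℕ) (I : Ideal R) : Ideal R :=
  Ideal.span {x | InTightClosure p I x}

lemma mem_frobeniusPower_of_mem {R : Type*} [CommRing R] {I : Ideal R} {a : R}
    (ha : a ∈ I) (q : ℕ) : a ^ q ∈ frobeniusPower I q :=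
  Ideal.subset_span ⟨a, ha, rfl⟩

lemma frobeniusPower_le {R : Type*} [CommRing R] (I : Ideal R) {p : ℕ} (hp : 0 < p)
    {e N : ℕ} (h : e ≤ N) : frobeniusPower I (p ^ N) ≤ frobeniusPower I (p ^ e) := by
  rw [frobeniusPower, Ideal.span_le]
  rintro _ ⟨a, ha, rfl⟩
  have h1 : (a : R) ^ p ^ N = (a ^ p ^ e) ^ p ^ (N - e) := by
    rw [← pow_mul, ← pow_add, Nat.add_sub_cancel' h]
  simp only [SetLike.mem_coe, h1]
  exact Ideal.pow_mem_of_mem _ (mem_frobeniusPower_of_mem ha _) _ (pow_pos hp _)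

lemma phi_mul_mem {R : Type*} [CommRing R] {T I : Ideal R} (p e : ℕ) (φ : R →+ R)
    (hφtw : ∀ r x : R, φ (r ^ p ^ e * x) = r * φ x)
    (hφT : ∀ s ∈ T, φ s ∈ T) {z : R} (hz : z ∈ frobeniusPower I (p ^ e)) :
    ∀ t ∈ T, φ (z * t) ∈ T * I := by
  induction hz using Submodule.span_induction with
  | mem g hg =>
    obtain ⟨a, ha, rfl⟩ := hg
    intro t ht
    rw [hφtw a t, mul_comm a (φ t)]
    exact Ideal.mul_mem_mul (hφT t ht) ha
  | zero => intro t ht; simp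
  | add z1 z2 h1 h2 ih1 ih2 =>
    intro t ht
    rw [add_mul, map_add]
    exact add_mem (ih1 t ht) (ih2 t ht)
  | smul r z hz ih =>
    intro t ht
    have : (r • z) * t = z * (r * t) := by rw [smul_eq_mul]; ring
    rw [this]
    exact ih (r * t) (Ideal.mul_mem_left _ _ ht)


/-- If `(R, D)` is a Cartier algebra pair and `T = τ(R,D)` is the smallest
`D`-compatible ideal meeting `R^o`, then `T` is a strong test ideal. -/
theorem strong_test_ideal_of_cartier_algebra {R : Type*} [CommRing R] [IsNoetherianRing R]
    [IsLocalRing R] [IsReduced R] (p : ℕ) [Fact p.Prime] [CharP R p]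
    (hFF : (frobenius R p).Finite)
    (D : ℕ → Set (R →+ R))
    (hDtwist : ∀ e : ℕ, ∀ φ ∈ D e, ∀ r x : R, φ (r ^ p ^ e * x) = r * φ x)
    (hD0 : D 0 = {φ : R →+ R | ∃ r : R, ∀ x : R, φ x = r * x})
    (hDadd : ∀ e : ℕ, ∀ φ ∈ D e, ∀ ψ ∈ D e, φ + ψ ∈ D e)
    (hDcomp : ∀ e e' : ℕ, ∀ φ ∈ D e, ∀ ψ ∈ D e', φ.comp ψ ∈ D (e + e'))
    (hDne : ∃ e : ℕ, 1 ≤ e ∧ ∃ φ ∈ D e, φ ≠ 0)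
    (T : Ideal R)
    (hTreg : ∃ c ∈ T, Rreg c)
    (hTcomp : ∀ e : ℕ, ∀ φ ∈ D e, ∀ x ∈ T, φ x ∈ T)
    (hTmin : ∀ J : Ideal R, (∃ c ∈ J, Rreg c) →
      (∀ e : ℕ, ∀ φ ∈ D e, ∀ x ∈ J, φ x ∈ J) → T ≤ J) :
    ∀ I : Ideal R, T * tightClosure p I = T * I := by
  classical
  obtain ⟨t₀, ht₀T, ht₀reg⟩ := hTreg
  have hp1 : 0 < p := (Fact.out : p.Prime).pos
  have hPprime : ∀ P ∈ minimalPrimes R, P.IsPrime := fun P hP => hP.1.1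
  have hfin : (minimalPrimes R).Finite := minimalPrimes.finite_of_isNoetherianRing R
  -- identity map is in D 0
  have hid0 : AddMonoidHom.id R ∈ D 0 := by
    rw [hD0]; exact ⟨1, fun x => (one_mul x).symm⟩
  -- existence of elements in all-but-one minimal primes
  have hexcl : ∀ P ∈ minimalPrimes R, ∃ y : R, y ∉ P ∧
      ∀ Q ∈ minimalPrimes R, Q ≠ P → y ∈ Q := by
    intro P hP
    have hnle : ¬ ((hfin.toFinset.erase P).inf id ≤ P) := by
      intro hle
      obtain ⟨Q, hQs, hQle⟩ := (hPprime P hP).inf_le'.mp hle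
      have hQne := (Finset.mem_erase.mp hQs).1
      have hQmem : Q ∈ minimalPrimes R :=
        hfin.mem_toFinset.mp (Finset.mem_erase.mp hQs).2
      exact hQne (le_antisymm hQle (hP.2 ⟨hPprime Q hQmem, bot_le⟩ hQle))
    obtain ⟨y, hy1, hy2⟩ := SetLike.not_le_iff_exists.mp hnle
    refine ⟨y, hy2, fun Q hQ hne2 => ?_⟩
    have : Q ∈ hfin.toFinset.erase P := Finset.mem_erase.mpr ⟨hne2, hfin.mem_toFinset.mpr hQ⟩
    exact (Submodule.mem_finsetInf.mp hy1) Q this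
  choose eP hePnot hePmem using hexcl
  intro I
  apply le_antisymm
  · rw [Ideal.mul_le]
    intro t ht y hy
    induction hy using Submodule.span_induction with
    | zero => simp
    | add y1 y2 h1 h2 ih1 ih2 => rw [mul_add]; exact add_mem ih1 ih2
    | smul r y hy ih =>
      have h : t * (r • y) = r * (t * y) := by rw [smul_eq_mul]; ring
      rw [h]
      exact Ideal.mul_mem_left _ _ ih
    | mem x hx =>
      obtain ⟨c, hcreg, N, hcN⟩ := hx
      -- the seeds
      set d : (P : Ideal R) → P ∈ minimalPrimes R → R :=
        fun P hP => if x ∈ P then c * eP P hP else c * x ^ p ^ N with hd_def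
      have hd1 : ∀ (P) (hP : P ∈ minimalPrimes R) (e : ℕ),
          x ^ p ^ e * d P hP ∈ frobeniusPower I (p ^ e) := by
        intro P hP e
        by_cases hxP : x ∈ P
        · have h0 : eP P hP * x = 0 := by
            have hmem : eP P hP * x ∈ sInf (minimalPrimes R) := by
              rw [Submodule.mem_sInf]
              intro Q hQ
              by_cases hQP : Q = P
              · subst hQP; exact Ideal.mul_mem_left _ _ hxP
              · exact Ideal.mul_mem_right _ _ (hePmem P hP Q hQ hQP)
            have : sInf (minimalPrimes R) = (⊥ : Ideal R) := by
              have h1 : sInf (minimalPrimes R) = (⊥ : Ideal R).radical :=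
                Ideal.sInf_minimalPrimes
              rw [h1]
              have := nilradical_eq_zero R
              rwa [nilradical] at this
            rw [this] at hmem
            simpa using hmem
          have hxpow : x ^ p ^ e = x * x ^ (p ^ e - 1) := by
            have hn : p ^ e = (p ^ e - 1) + 1 := by
              have := pow_pos hp1 e; omega
            conv_lhs => rw [hn, pow_succ']
          have : x ^ p ^ e * d P hP = (eP P hP * x) * (c * x ^ (p ^ e - 1)) := by
            rw [hd_def]; simp only [if_pos hxP]; rw [hxpow]; ring
          rw [this, h0, zero_mul]
          exact zero_mem _
        · have hdeq : d P hP = c * x ^ p ^ N := by rw [hd_def]; simp [hxP]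
          rcases le_or_gt N e with h | h
          · have : x ^ p ^ e * d P hP = (c * x ^ p ^ e) * x ^ p ^ N := by
              rw [hdeq]; ring
            rw [this]
            exact Ideal.mul_mem_right _ _ (hcN e h)
          · have hmem : c * x ^ p ^ N ∈ frobeniusPower I (p ^ e) :=
              frobeniusPower_le I hp1 h.le (hcN N le_rfl)
            rw [hdeq]
            exact Ideal.mul_mem_left _ _ hmem
      have hd2 : ∀ (P) (hP : P ∈ minimalPrimes R), d P hP * t₀ ∉ P := by
        intro P hP
        have hpr := hPprime P hP
        have hmul : ∀ a b : R, a ∉ P → b ∉ P → a * b ∉ P :=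
          fun a b ha hb hab => (hpr.mem_or_mem hab).elim ha hb
        by_cases hxP : x ∈ P
        · have : d P hP = c * eP P hP := by rw [hd_def]; simp [hxP]
          rw [this]
          exact hmul _ _ (hmul _ _ (hcreg P hP) (hePnot P hP)) (ht₀reg P hP)
        · have : d P hP = c * x ^ p ^ N := by rw [hd_def]; simp [hxP]
          rw [this]
          refine hmul _ _ (hmul _ _ (hcreg P hP) ?_) (ht₀reg P hP)
          exact fun hpow => hxP (hpr.mem_of_pow_mem _ hpow)
      -- the compatible ideal J generated by G
      set G : Set R := {y | ∃ (e : ℕ) (φ : R →+ R), φ ∈ D e ∧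
        ∃ (P : Ideal R) (hP : P ∈ minimalPrimes R) (s : R), s ∈ T ∧ y = φ (d P hP * s)}
        with hG_def
      set J : Ideal R := Ideal.span G with hJ_def
      have hGsmul : ∀ (r : R), ∀ g ∈ G, r * g ∈ G := by
        rintro r g ⟨e, φ, hφ, P, hP, s, hs, rfl⟩
        refine ⟨e, φ, hφ, P, hP, r ^ p ^ e * s, Ideal.mul_mem_left _ _ hs, ?_⟩
        rw [show d P hP * (r ^ p ^ e * s) = r ^ p ^ e * (d P hP * s) by ring,
          hDtwist e φ hφ r (d P hP * s)]
      have hJclosure : ∀ z ∈ J, z ∈ AddSubmonoid.closure G := by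
        intro z hz
        induction hz using Submodule.span_induction with
        | mem g hg => exact AddSubmonoid.subset_closure hg
        | zero => exact zero_mem _
        | add a b ha hb iha ihb => exact add_mem iha ihb
        | smul r z hz ih =>
          rw [smul_eq_mul]
          clear hz
          induction ih using AddSubmonoid.closure_induction with
          | mem g hg => exact AddSubmonoid.subset_closure (hGsmul r g hg)
          | zero => rw [mul_zero]; exact zero_mem _
          | add a b ha hb iha ihb => rw [mul_add]; exact add_mem iha ihb
      have hJcomp : ∀ e : ℕ, ∀ φ ∈ D e, ∀ z ∈ J, φ z ∈ J := by
        intro e φ hφ z hz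
        have hz' := hJclosure z hz
        clear hz
        induction hz' using AddSubmonoid.closure_induction with
        | mem g hg =>
          obtain ⟨e', ψ, hψ, P, hP, s, hs, rfl⟩ := hg
          exact Ideal.subset_span ⟨e + e', φ.comp ψ, hDcomp e e' φ hφ ψ hψ, P, hP, s, hs, rfl⟩
        | zero => rw [map_zero]; exact zero_mem _
        | add a b ha hb iha ihb => rw [map_add]; exact add_mem iha ihb
      have hJreg : ∃ z ∈ J, Rreg z := by
        have hGmem : ∀ (P) (hP : P ∈ minimalPrimes R), d P hP * t₀ ∈ J := by
          intro P hP
          exact Ideal.subset_span ⟨0, AddMonoidHom.id R, hid0, P, hP, t₀, ht₀T, rfl⟩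
        have hnot : ¬ ∃ Pi ∈ hfin.toFinset, J ≤ Pi := by
          rintro ⟨P, hPs, hle⟩
          have hP := hfin.mem_toFinset.mp hPs
          exact hd2 P hP (hle (hGmem P hP))
        have hnsub : ¬ ((J : Set R) ⊆ ⋃ Q ∈ (↑hfin.toFinset : Set (Ideal R)), (Q : Set R)) := by
          intro hsub
          exact hnot ((Ideal.subset_union_prime ⊥ ⊥
            (fun Q hQ _ _ => hPprime Q (hfin.mem_toFinset.mp hQ))).mp hsub)
        obtain ⟨z, hzJ, hz⟩ := Set.not_subset.mp hnsub
        refine ⟨z, hzJ, fun P hP hzP => hz ?_⟩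
        exact Set.mem_biUnion (show P ∈ (↑hfin.toFinset : Set (Ideal R)) from
          by simpa using hfin.mem_toFinset.mpr hP) hzP
      have hTJ : T ≤ J := hTmin J hJreg hJcomp
      have hfinal : ∀ z ∈ J, x * z ∈ T * I := by
        intro z hz
        have hz' := hJclosure z hz
        clear hz
        induction hz' using AddSubmonoid.closure_induction with
        | mem g hg =>
          obtain ⟨e, φ, hφ, P, hP, s, hs, rfl⟩ := hg
          have hkey := phi_mul_mem p e φ (hDtwist e φ hφ)
            (fun u hu => hTcomp e φ hφ u hu) (hd1 P hP e) s hs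
          rwa [mul_assoc, hDtwist e φ hφ x (d P hP * s)] at hkey
        | zero => rw [mul_zero]; exact zero_mem _
        | add a b ha hb iha ihb => rw [mul_add]; exact add_mem iha ihb
      rw [mul_comm t x]
      exact hfinal t (hTJ ht)
  · apply Ideal.mul_mono_right
    intro a ha
    exact Ideal.subset_span
      ⟨t₀, ht₀reg, 0, fun e _ => Ideal.mul_mem_left _ _ (mem_frobeniusPower_of_mem ha _)⟩
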